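/- Let s ∈ V. Define d_0 : V → ℝ≥0∞ by d_0(s) = 0 and d_0(v) = ∞ for v ≠ s, and inductively d_{k+1}(v) = min( d_k(v), min_{u ∈ V} ( d_k(u) + w(u,v) ) ). Then for every k ∈ ℕ and every v ∈ V, d_k(v) = δ_k(s,v); that is, k rounds of Bellman–Ford relaxation compute exactly the k-hop shortest-path distances from s. -/

import Mathlib

open scoped ENNReal BigOperators

/-- The weight of a walk, given as the list of vertices it visits (in order):
the sum of the edge weights of consecutive pairs. A single vertex has weight 0. -/
noncomputable def walkWeight {V : Type*} (w : V → V → ℝ≥0∞) (p : List V) : ℝ≥0∞ :=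
  (List.zipWith w p p.tail).sum

/-- `p` is a walk from `u` to `v`: a nonempty list of vertices starting at `u`
and ending at `v`. -/
def IsWalk {V : Type*} (u v : V) (p : List V) : Prop :=
  p.head? = some u ∧ p.getLast? = some v

/-- Shortest-path distance: infimum of walk weights over all walks from `u` to `v`
(`∞` if there is no walk). -/
noncomputable def delta {V : Type*} (w : V → V → ℝ≥0∞) (u v : V) : ℝ≥0∞ :=
  ⨅ p ∈ {p : List V | IsWalk u v p}, walkWeight w p

/-- `h`-hop shortest-path distance: infimum of walk weights over all walks from `u`
to `v` with at most `h` edges (`∞` if there is no such walk). -/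
noncomputable def deltaH {V : Type*} (w : V → V → ℝ≥0∞) (h : ℕ) (u v : V) : ℝ≥0∞ :=
  ⨅ p ∈ {p : List V | IsWalk u v p ∧ p.length ≤ h + 1}, walkWeight w p

section Aux
variable {V : Type*} (w : V → V → ℝ≥0∞)

lemma walkWeight_cons_cons (a b : V) (l : List V) :
    walkWeight w (a :: b :: l) = w a b + walkWeight w (b :: l) := by
  simp [walkWeight]

lemma walkWeight_append_last : ∀ (q : List V) (u v : V), q.getLast? = some u →
    walkWeight w (q ++ [v]) = walkWeight w q + w u v
  | [], u, v, h => by simp at h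
  | [a], u, v, h => by
    simp at h; subst h
    simp [walkWeight]
  | a :: b :: q, u, v, h => by
    have h' : (b :: q).getLast? = some u := by
      rwa [List.getLast?_cons_cons] at h
    have ih := walkWeight_append_last (b :: q) u v h'
    simp only [List.cons_append, walkWeight_cons_cons]
    rw [← List.cons_append, ih]; ring

open Classical in
lemma deltaH_zero (s v : V) : deltaH w 0 s v = (if v = s then 0 else ⊤ : ℝ≥0∞) := by
  split_ifs with hv
  · subst hv
    refine le_antisymm ?_ zero_le
    have : walkWeight w [v] = 0 := by simp [walkWeight]
    exact le_trans (iInf₂_le [v] ⟨⟨rfl, rfl⟩, by simp⟩) this.le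
  · refine le_antisymm le_top (le_iInf₂ fun p hp => ?_)
    obtain ⟨⟨hh, hl⟩, hlen⟩ := hp
    match p with
    | [] => simp at hh
    | [a] =>
      simp at hh hl
      exact absurd (hl ▸ hh : v = s) hv
    | a :: b :: t => simp at hlen

lemma deltaH_succ [Fintype V] (k : ℕ) (s v : V) :
    deltaH w (k + 1) s v = min (deltaH w k s v) (⨅ u : V, deltaH w k s u + w u v) := by
  refine le_antisymm (le_min ?_ ?_) ?_
  · -- deltaH (k+1) ≤ deltaH k
    refine le_iInf₂ fun p hp => ?_
    exact iInf₂_le p ⟨hp.1, hp.2.trans (by omega)⟩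
  · -- deltaH (k+1) ≤ ⨅ u, deltaH k s u + w u v
    refine le_iInf fun u => ?_
    conv_rhs => rw [deltaH]
    rw [ENNReal.iInf_add]
    refine le_iInf fun p => ?_
    rw [ENNReal.iInf_add]
    refine le_iInf fun hp => ?_
    obtain ⟨⟨hh, hl⟩, hlen⟩ := hp
    have hne : p ≠ [] := by rintro rfl; simp at hh
    have hw : walkWeight w (p ++ [v]) = walkWeight w p + w u v :=
      walkWeight_append_last w p u v hl
    refine le_trans (iInf₂_le (p ++ [v]) ?_) hw.le
    refine ⟨⟨?_, by simp⟩, by simp; omega⟩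
    rwa [List.head?_append_of_ne_nil _ hne]
  · -- min ≤ deltaH (k+1)
    refine le_iInf₂ fun p hp => ?_
    obtain ⟨⟨hh, hl⟩, hlen⟩ := hp
    by_cases hsh : p.length ≤ k + 1
    · exact le_trans (min_le_left _ _) (iInf₂_le p ⟨⟨hh, hl⟩, hsh⟩)
    · have hne : p ≠ [] := by rintro rfl; simp at hh
      set q := p.dropLast with hq
      have hqne : q ≠ [] := by
        rw [hq]
        intro h
        have : p.dropLast.length = p.length - 1 := List.length_dropLast
        rw [h] at this
        simp at this
        omega
      have hpq : p = q ++ [v] := by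
        have h1 : p.getLast hne = v := by
          have := List.getLast?_eq_getLast hne
          rw [hl] at this; exact (Option.some_inj.mp this.symm)
        conv_lhs => rw [← List.dropLast_append_getLast hne, h1]
      set u := q.getLast hqne with hu
      have hql : q.getLast? = some u := List.getLast?_eq_getLast hqne
      have hw : walkWeight w p = walkWeight w q + w u v := by
        rw [hpq]; exact walkWeight_append_last w q u v hql
      have hqh : q.head? = some s := by
        rw [hpq, List.head?_append_of_ne_nil _ hqne] at hh; exact hh
      have hqlen : q.length ≤ k + 1 := by
        have : p.length = q.length + 1 := by rw [hpq]; simp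
        omega
      have h1 : deltaH w k s u ≤ walkWeight w q := iInf₂_le q ⟨⟨hqh, hql⟩, hqlen⟩
      calc min (deltaH w k s v) (⨅ u : V, deltaH w k s u + w u v)
          ≤ deltaH w k s u + w u v := le_trans (min_le_right _ _) (iInf_le _ u)
        _ ≤ walkWeight w q + w u v := add_le_add_left h1 _
        _ = walkWeight w p := hw.symm

end Aux

/-- `k` rounds of Bellman–Ford relaxation from source `s` compute
exactly the `k`-hop shortest-path distances: `d_k(v) = δ_k(s,v)` for all `k, v`. -/
theorem bellmanFord_computes_hop_distances
    {V : Type*} [Fintype V] [Nonempty V]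
    (w : V → V → ℝ≥0∞) (s : V) (d : ℕ → V → ℝ≥0∞)
    (h0s : d 0 s = 0)
    (h0 : ∀ v : V, v ≠ s → d 0 v = ⊤)
    (hstep : ∀ (k : ℕ) (v : V),
      d (k + 1) v = min (d k v) (⨅ u : V, d k u + w u v)) :
    ∀ (k : ℕ) (v : V), d k v = deltaH w k s v := by
  intro k
  induction k with
  | zero =>
    intro v
    rw [deltaH_zero]
    by_cases hv : v = s
    · subst hv; simp [h0s]
    · simp [h0 v hv, hv]
  | succ k ih =>
    intro v
    rw [hstep, deltaH_succ, ih]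
    congr 1
    exact iInf_congr fun u => by rw [ih]
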